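/- The set of points (r_a, r_b, r_c, r_d) in ℝ^4 satisfying the nine inequalities r_a ≥ 0, r_b ≥ 0, r_c ≥ 0, r_d ≥ 0, r_b ≤ 1, r_c ≤ 1, r_a + r_b + r_c ≤ 2, r_b + r_c + r_d ≤ 2, and r_a + r_b + r_c + r_d ≤ 3 is equal to the convex hull in ℝ^4 of the 14 points (0,0,0,0), (0,0,0,2), (2,0,0,0), (0,1,0,0), (0,0,1,0), (2,0,0,1), (1,0,0,2), (0,0,1,1), (1,1,0,0), (1,0,1,1), (1,1,0,1), (0,1,1,0), (0,1,0,1), (1,0,1,0). -/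

import Mathlib

open Matrix

lemma mem_hull14 {S : Set (Fin 4 → ℝ)} (v : Fin 14 → Fin 4 → ℝ)
    (hv : ∀ i, v i ∈ S) (w : Fin 14 → ℝ) (hw : ∀ i, 0 ≤ w i)
    (h1 : ∑ i, w i = 1) {x : Fin 4 → ℝ} (hx : ∑ i, w i • v i = x) :
    x ∈ convexHull ℝ S := by
  rw [← hx, ← Finset.univ.centerMass_eq_of_sum_1 _ h1]
  exact Finset.centerMass_mem_convexHull _ (fun i _ => hw i)
    (by rw [h1]; norm_num) (fun i _ => hv i)

set_option maxHeartbeats 4000000 in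
theorem generalized_butterfly_rate_region :
    {r : Fin 4 → ℝ | 0 ≤ r 0 ∧ 0 ≤ r 1 ∧ 0 ≤ r 2 ∧ 0 ≤ r 3 ∧
      r 1 ≤ 1 ∧ r 2 ≤ 1 ∧ r 0 + r 1 + r 2 ≤ 2 ∧ r 1 + r 2 + r 3 ≤ 2 ∧
      r 0 + r 1 + r 2 + r 3 ≤ 3} =
    convexHull ℝ {![0,0,0,0], ![0,0,0,2], ![2,0,0,0], ![0,1,0,0], ![0,0,1,0],
      ![2,0,0,1], ![1,0,0,2], ![0,0,1,1], ![1,1,0,0], ![1,0,1,1], ![1,1,0,1],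
      ![0,1,1,0], ![0,1,0,1], ![1,0,1,0]} := by
  apply Set.Subset.antisymm
  · intro r hr
    obtain ⟨ha, hb, hc, hd, hb1, hc1, h2a, h2d, h3⟩ := hr
    set v : Fin 14 → Fin 4 → ℝ :=
      ![![0,0,0,0], ![0,0,0,2], ![2,0,0,0], ![0,1,0,0], ![0,0,1,0],
        ![2,0,0,1], ![1,0,0,2], ![0,0,1,1], ![1,1,0,0], ![1,0,1,1], ![1,1,0,1],
        ![0,1,1,0], ![0,1,0,1], ![1,0,1,0]] with hv_def
    have hv : ∀ i, v i ∈ ({![0,0,0,0], ![0,0,0,2], ![2,0,0,0], ![0,1,0,0], ![0,0,1,0],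
      ![2,0,0,1], ![1,0,0,2], ![0,0,1,1], ![1,1,0,0], ![1,0,1,1], ![1,1,0,1],
      ![0,1,1,0], ![0,1,0,1], ![1,0,1,0]} : Set (Fin 4 → ℝ)) := by
      simp only [hv_def, Fin.forall_fin_succ, Fin.forall_fin_one, IsEmpty.forall_iff, and_true, Matrix.cons_val_zero,
        Matrix.cons_val_succ]
      refine ⟨?_,?_,?_,?_,?_,?_,?_,?_,?_,?_,?_,?_,?_,?_⟩ <;> simp
    rcases lt_or_ge (r 1 + r 2) 1 with hs | hs
    · set ma : ℝ := min (r 0) 1 with hma_def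
      set md : ℝ := min (r 3) 1 with hmd_def
      have hma0 : 0 ≤ ma := le_min ha zero_le_one
      have hma1 : ma ≤ 1 := min_le_right _ _
      have hmaa : ma ≤ r 0 := min_le_left _ _
      have hmd0 : 0 ≤ md := le_min hd zero_le_one
      have hmd1 : md ≤ 1 := min_le_right _ _
      have hmdd : md ≤ r 3 := min_le_left _ _
      have h1a : (0:ℝ) ≤ 1 - ma := by linarith
      have h1d : (0:ℝ) ≤ 1 - md := by linarith
      have hsma : (r 1 + r 2) * ma ≤ r 0 := by nlinarith
      have hsmd : (r 1 + r 2) * md ≤ r 3 := by nlinarith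
      have hA2 : r 0 - (r 1 + r 2) * ma ≤ 2 * (1 - (r 1 + r 2)) := by
        rcases le_total (r 0) 1 with h | h
        · rw [hma_def, min_eq_left h]; nlinarith
        · rw [hma_def, min_eq_right h]; nlinarith
      have hD2 : r 3 - (r 1 + r 2) * md ≤ 2 * (1 - (r 1 + r 2)) := by
        rcases le_total (r 3) 1 with h | h
        · rw [hmd_def, min_eq_left h]; nlinarith
        · rw [hmd_def, min_eq_right h]; nlinarith
      have hAD : (r 0 - (r 1 + r 2) * ma) + (r 3 - (r 1 + r 2) * md) ≤ 3 * (1 - (r 1 + r 2)) := by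
        rcases le_total (r 0) 1 with h | h <;> rcases le_total (r 3) 1 with h' | h'
        · rw [hma_def, min_eq_left h, hmd_def, min_eq_left h']; nlinarith
        · rw [hma_def, min_eq_left h, hmd_def, min_eq_right h']; nlinarith
        · rw [hma_def, min_eq_right h, hmd_def, min_eq_left h']; nlinarith
        · rw [hma_def, min_eq_right h, hmd_def, min_eq_right h']; nlinarith
      have hA0 : 0 ≤ r 0 - (r 1 + r 2) * ma := by linarith
      have hD0 : 0 ≤ r 3 - (r 1 + r 2) * md := by linarith
      rcases le_total (r 3 - (r 1 + r 2) * md) (2 * (r 0 - (r 1 + r 2) * ma)) with ht | ht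
      · rcases le_total (r 0 - (r 1 + r 2) * ma) (2 * (r 3 - (r 1 + r 2) * md)) with ht' | ht'
        · -- triangle T2
          refine mem_hull14 v hv
            ![(1 - (r 1 + r 2)) - ((r 0 - (r 1 + r 2) * ma) + (r 3 - (r 1 + r 2) * md))/3,
              0,
              0,
              r 1 * (1 - ma) * (1 - md),
              r 2 * (1 - ma) * (1 - md),
              (2*(r 0 - (r 1 + r 2) * ma) - (r 3 - (r 1 + r 2) * md))/3,
              (2*(r 3 - (r 1 + r 2) * md) - (r 0 - (r 1 + r 2) * ma))/3,
              r 2 * (1 - ma) * md,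
              r 1 * ma * (1 - md),
              r 2 * ma * md,
              r 1 * ma * md,
              0,
              r 1 * (1 - ma) * md,
              r 2 * ma * (1 - md)] ?_ ?_ ?_
          · simp only [Fin.forall_fin_succ, Fin.forall_fin_one, IsEmpty.forall_iff, and_true, Matrix.cons_val_zero,
              Matrix.cons_val_succ]
            refine ⟨?_,?_,?_,?_,?_,?_,?_,?_,?_,?_,?_,?_,?_,?_⟩
            · linarith
            · norm_num
            · norm_num
            · exact mul_nonneg (mul_nonneg hb h1a) h1d
            · exact mul_nonneg (mul_nonneg hc h1a) h1d
            · linarith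
            · linarith
            · exact mul_nonneg (mul_nonneg hc h1a) hmd0
            · exact mul_nonneg (mul_nonneg hb hma0) h1d
            · exact mul_nonneg (mul_nonneg hc hma0) hmd0
            · exact mul_nonneg (mul_nonneg hb hma0) hmd0
            · norm_num
            · exact mul_nonneg (mul_nonneg hb h1a) hmd0
            · exact mul_nonneg (mul_nonneg hc hma0) h1d
          · simp [Fin.sum_univ_succ]; ring
          · funext j
            rw [Finset.sum_apply]
            fin_cases j <;> simp [hv_def, Fin.sum_univ_succ] <;> ring
        · -- triangle T1
          refine mem_hull14 v hv
            ![(1 - (r 1 + r 2)) - (r 0 - (r 1 + r 2) * ma)/2,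
              0,
              ((r 0 - (r 1 + r 2) * ma) - 2*(r 3 - (r 1 + r 2) * md))/2,
              r 1 * (1 - ma) * (1 - md),
              r 2 * (1 - ma) * (1 - md),
              (r 3 - (r 1 + r 2) * md),
              0,
              r 2 * (1 - ma) * md,
              r 1 * ma * (1 - md),
              r 2 * ma * md,
              r 1 * ma * md,
              0,
              r 1 * (1 - ma) * md,
              r 2 * ma * (1 - md)] ?_ ?_ ?_
          · simp only [Fin.forall_fin_succ, Fin.forall_fin_one, IsEmpty.forall_iff, and_true, Matrix.cons_val_zero,
              Matrix.cons_val_succ]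
            refine ⟨?_,?_,?_,?_,?_,?_,?_,?_,?_,?_,?_,?_,?_,?_⟩
            · linarith
            · norm_num
            · linarith
            · exact mul_nonneg (mul_nonneg hb h1a) h1d
            · exact mul_nonneg (mul_nonneg hc h1a) h1d
            · linarith
            · norm_num
            · exact mul_nonneg (mul_nonneg hc h1a) hmd0
            · exact mul_nonneg (mul_nonneg hb hma0) h1d
            · exact mul_nonneg (mul_nonneg hc hma0) hmd0
            · exact mul_nonneg (mul_nonneg hb hma0) hmd0
            · norm_num
            · exact mul_nonneg (mul_nonneg hb h1a) hmd0
            · exact mul_nonneg (mul_nonneg hc hma0) h1d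
          · simp [Fin.sum_univ_succ]; ring
          · funext j
            rw [Finset.sum_apply]
            fin_cases j <;> simp [hv_def, Fin.sum_univ_succ] <;> ring
      · -- triangle T3
        refine mem_hull14 v hv
          ![(1 - (r 1 + r 2)) - (r 3 - (r 1 + r 2) * md)/2,
            ((r 3 - (r 1 + r 2) * md) - 2*(r 0 - (r 1 + r 2) * ma))/2,
            0,
            r 1 * (1 - ma) * (1 - md),
            r 2 * (1 - ma) * (1 - md),
            0,
            (r 0 - (r 1 + r 2) * ma),
            r 2 * (1 - ma) * md,
            r 1 * ma * (1 - md),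
            r 2 * ma * md,
            r 1 * ma * md,
            0,
            r 1 * (1 - ma) * md,
            r 2 * ma * (1 - md)] ?_ ?_ ?_
        · simp only [Fin.forall_fin_succ, Fin.forall_fin_one, IsEmpty.forall_iff, and_true, Matrix.cons_val_zero,
            Matrix.cons_val_succ]
          refine ⟨?_,?_,?_,?_,?_,?_,?_,?_,?_,?_,?_,?_,?_,?_⟩
          · linarith
          · linarith
          · norm_num
          · exact mul_nonneg (mul_nonneg hb h1a) h1d
          · exact mul_nonneg (mul_nonneg hc h1a) h1d
          · norm_num
          · linarith
          · exact mul_nonneg (mul_nonneg hc h1a) hmd0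
          · exact mul_nonneg (mul_nonneg hb hma0) h1d
          · exact mul_nonneg (mul_nonneg hc hma0) hmd0
          · exact mul_nonneg (mul_nonneg hb hma0) hmd0
          · norm_num
          · exact mul_nonneg (mul_nonneg hb h1a) hmd0
          · exact mul_nonneg (mul_nonneg hc hma0) h1d
        · simp [Fin.sum_univ_succ]; ring
        · funext j
          rw [Finset.sum_apply]
          fin_cases j <;> simp [hv_def, Fin.sum_univ_succ] <;> ring
    · rcases lt_or_ge (r 1 + r 2) 2 with h2 | h2
      · have hk : (0:ℝ) < 2 - (r 1 + r 2) := by linarith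
        have hk0 : (2 - (r 1 + r 2)) ≠ 0 := ne_of_gt hk
        have hKA : (0:ℝ) ≤ (2 - (r 1 + r 2)) - r 0 := by linarith
        have hKD : (0:ℝ) ≤ (2 - (r 1 + r 2)) - r 3 := by linarith
        have hB : (0:ℝ) ≤ 1 - r 1 := by linarith
        have hC : (0:ℝ) ≤ 1 - r 2 := by linarith
        have hkk : (0:ℝ) ≤ (2 - (r 1 + r 2)) * (2 - (r 1 + r 2)) := by positivity
        refine mem_hull14 v hv
          ![0,
            0,
            0,
            ((2 - (r 1 + r 2)) - r 0) * (1 - r 2) * ((2 - (r 1 + r 2)) - r 3) / ((2 - (r 1 + r 2)) * (2 - (r 1 + r 2))),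
            ((2 - (r 1 + r 2)) - r 0) * (1 - r 1) * ((2 - (r 1 + r 2)) - r 3) / ((2 - (r 1 + r 2)) * (2 - (r 1 + r 2))),
            0,
            0,
            ((2 - (r 1 + r 2)) - r 0) * (1 - r 1) * r 3 / ((2 - (r 1 + r 2)) * (2 - (r 1 + r 2))),
            r 0 * (1 - r 2) * ((2 - (r 1 + r 2)) - r 3) / ((2 - (r 1 + r 2)) * (2 - (r 1 + r 2))),
            r 0 * (1 - r 1) * r 3 / ((2 - (r 1 + r 2)) * (2 - (r 1 + r 2))),
            r 0 * (1 - r 2) * r 3 / ((2 - (r 1 + r 2)) * (2 - (r 1 + r 2))),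
            (r 1 + r 2) - 1,
            ((2 - (r 1 + r 2)) - r 0) * (1 - r 2) * r 3 / ((2 - (r 1 + r 2)) * (2 - (r 1 + r 2))),
            r 0 * (1 - r 1) * ((2 - (r 1 + r 2)) - r 3) / ((2 - (r 1 + r 2)) * (2 - (r 1 + r 2)))] ?_ ?_ ?_
        · simp only [Fin.forall_fin_succ, Fin.forall_fin_one, IsEmpty.forall_iff, and_true, Matrix.cons_val_zero,
            Matrix.cons_val_succ]
          refine ⟨?_,?_,?_,?_,?_,?_,?_,?_,?_,?_,?_,?_,?_,?_⟩
          · norm_num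
          · norm_num
          · norm_num
          · exact div_nonneg (mul_nonneg (mul_nonneg hKA hC) hKD) hkk
          · exact div_nonneg (mul_nonneg (mul_nonneg hKA hB) hKD) hkk
          · norm_num
          · norm_num
          · exact div_nonneg (mul_nonneg (mul_nonneg hKA hB) hd) hkk
          · exact div_nonneg (mul_nonneg (mul_nonneg ha hC) hKD) hkk
          · exact div_nonneg (mul_nonneg (mul_nonneg ha hB) hd) hkk
          · exact div_nonneg (mul_nonneg (mul_nonneg ha hC) hd) hkk
          · linarith
          · exact div_nonneg (mul_nonneg (mul_nonneg hKA hC) hd) hkk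
          · exact div_nonneg (mul_nonneg (mul_nonneg ha hB) hKD) hkk
        · simp [Fin.sum_univ_succ]; field_simp; ring
        · funext j
          rw [Finset.sum_apply]
          fin_cases j <;> simp [hv_def, Fin.sum_univ_succ] <;> field_simp <;> ring
      · have hb2 : r 1 = 1 := by linarith
        have hc2 : r 2 = 1 := by linarith
        have ha2 : r 0 = 0 := by linarith
        have hd2 : r 3 = 0 := by linarith
        have hre : r = ![0,1,1,0] := by
          funext j; fin_cases j <;> simp [ha2, hb2, hc2, hd2]
        rw [hre]
        exact subset_convexHull ℝ _ (by simp)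
  · apply convexHull_min
    · intro x hx
      simp only [Set.mem_insert_iff, Set.mem_singleton_iff] at hx
      rcases hx with rfl|rfl|rfl|rfl|rfl|rfl|rfl|rfl|rfl|rfl|rfl|rfl|rfl|rfl <;>
        refine ⟨by norm_num [Matrix.cons_val_two, Matrix.cons_val_three], by norm_num [Matrix.cons_val_two, Matrix.cons_val_three], by norm_num [Matrix.cons_val_two, Matrix.cons_val_three], by norm_num [Matrix.cons_val_two, Matrix.cons_val_three], by norm_num [Matrix.cons_val_two, Matrix.cons_val_three],
          by norm_num [Matrix.cons_val_two, Matrix.cons_val_three], by norm_num [Matrix.cons_val_two, Matrix.cons_val_three], by norm_num [Matrix.cons_val_two, Matrix.cons_val_three], by norm_num [Matrix.cons_val_two, Matrix.cons_val_three]⟩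
    · intro x hx y hy p q hp hq hpq
      obtain ⟨hx0,hx1,hx2,hx3,hx4,hx5,hx6,hx7,hx8⟩ := hx
      obtain ⟨hy0,hy1,hy2,hy3,hy4,hy5,hy6,hy7,hy8⟩ := hy
      simp only [Set.mem_setOf_eq, Pi.add_apply, Pi.smul_apply, smul_eq_mul]
      refine ⟨?_,?_,?_,?_,?_,?_,?_,?_,?_⟩ <;>
        nlinarith [mul_nonneg hp hx0, mul_nonneg hq hy0, mul_nonneg hp hx1, mul_nonneg hq hy1,
          mul_nonneg hp hx2, mul_nonneg hq hy2, mul_nonneg hp hx3, mul_nonneg hq hy3,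
          mul_le_mul_of_nonneg_left hx4 hp, mul_le_mul_of_nonneg_left hy4 hq,
          mul_le_mul_of_nonneg_left hx5 hp, mul_le_mul_of_nonneg_left hy5 hq,
          mul_le_mul_of_nonneg_left hx6 hp, mul_le_mul_of_nonneg_left hy6 hq,
          mul_le_mul_of_nonneg_left hx7 hp, mul_le_mul_of_nonneg_left hy7 hq,
          mul_le_mul_of_nonneg_left hx8 hp, mul_le_mul_of_nonneg_left hy8 hq]
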